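/- Let X be a real normed linear space, a ≠ 0, and x₁,…,xₙ nonzero vectors with ‖a‖ ≥ ‖xⱼ − a‖ for each j. Then for pⱼ ≥ 0 with Σpⱼ = 1 and Σpⱼ‖xⱼ‖ > 0: ‖Σⱼ pⱼ•xⱼ‖/(Σⱼ pⱼ‖xⱼ‖) ≥ min_{1≤j≤n} (‖a‖ − ‖xⱼ − a‖)/‖xⱼ‖. -/

import Mathlib

theorem stmt16 {X : Type*} [NormedAddCommGroup X] [NormedSpace ℝ X]
    (n : ℕ) (hn : 0 < n) (x : Fin n → X) (hx0 : ∀ j, x j ≠ 0)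
    (a : X) (ha : a ≠ 0) (hx : ∀ j, ‖x j - a‖ ≤ ‖a‖)
    (p : Fin n → ℝ) (hp : ∀ j, 0 ≤ p j) (hp1 : ∑ j, p j = 1)
    (hpos : 0 < ∑ j, p j * ‖x j‖) :
    ‖∑ j, p j • x j‖ / (∑ j, p j * ‖x j‖) ≥
      Finset.univ.inf' (Finset.univ_nonempty_iff.mpr ⟨⟨0, hn⟩⟩)
        (fun j => (‖a‖ - ‖x j - a‖) / ‖x j‖) := by
  obtain ⟨f, hf1, hfa⟩ := exists_dual_vector ℝ a (norm_ne_zero_iff.mpr ha)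
  set m := Finset.univ.inf' (Finset.univ_nonempty_iff.mpr ⟨⟨0, hn⟩⟩)
        (fun j => (‖a‖ - ‖x j - a‖) / ‖x j‖) with hm
  have hkey : ∀ j, m * ‖x j‖ ≤ f (x j) := by
    intro j
    have hxj : (0:ℝ) < ‖x j‖ := norm_pos_iff.mpr (hx0 j)
    have h1 : m ≤ (‖a‖ - ‖x j - a‖) / ‖x j‖ :=
      Finset.inf'_le _ (Finset.mem_univ j)
    have h2 : m * ‖x j‖ ≤ ‖a‖ - ‖x j - a‖ := by
      rw [← le_div_iff₀ hxj]; exact h1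
    refine h2.trans ?_
    have h3 : f (a - x j) ≤ ‖a - x j‖ :=
      (le_abs_self _).trans (by simpa [hf1] using f.le_opNorm (a - x j))
    have hfa' : f a = ‖a‖ := by exact_mod_cast hfa
    rw [map_sub, hfa'] at h3
    have h4 : ‖a - x j‖ = ‖x j - a‖ := norm_sub_rev _ _
    linarith
  have hsum : m * (∑ j, p j * ‖x j‖) ≤ f (∑ j, p j • x j) := by
    rw [map_sum, Finset.mul_sum]
    refine Finset.sum_le_sum fun j _ => ?_
    rw [map_smul, smul_eq_mul]
    have := hkey j
    nlinarith [hp j]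
  have hnorm : f (∑ j, p j • x j) ≤ ‖∑ j, p j • x j‖ := by
    have := (∑ j, p j • x j) |> f.le_opNorm
    rw [hf1, one_mul] at this
    exact (le_abs_self _).trans this
  rw [ge_iff_le, le_div_iff₀ hpos]
  exact hsum.trans hnorm
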